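/- Let A, B be n×n positive definite complex matrices and v ∈ [0,1]. Suppose 0 < m·I ≤ A, B ≤ M·I for scalars 0 < m ≤ M, and let K(h) = (h+1)²/(4h) with h = M/m. Then the weighted arithmetic mean satisfies A ∇_v B ≤ K(h) · (A ♯_v B). -/

import Mathlib

open Matrix
open scoped ComplexOrder

noncomputable section
namespace Paper

variable {n : ℕ}

/-- Real part `(A + Aᴴ)/2`. -/
def re (A : Matrix (Fin n) (Fin n) ℂ) : Matrix (Fin n) (Fin n) ℂ := (2⁻¹ : ℂ) • (A + Aᴴ)

/-- Imaginary part `(A - Aᴴ)/(2i)`. -/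
def im (A : Matrix (Fin n) (Fin n) ℂ) : Matrix (Fin n) (Fin n) ℂ :=
  (2 * Complex.I)⁻¹ • (A - Aᴴ)

/-- The sector `S_α`. -/
def sector (α : ℝ) : Set ℂ := {z | 0 < z.re ∧ |z.im| ≤ z.re * Real.tan α}

/-- Numerical range of a matrix. -/
def numericalRange (A : Matrix (Fin n) (Fin n) ℂ) : Set ℂ :=
  {z | ∃ x : Fin n → ℂ, star x ⬝ᵥ x = 1 ∧ z = star x ⬝ᵥ (A *ᵥ x)}

/-- Loewner order: `X ≤ Y` iff `Y - X` is positive semidefinite. -/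
def loewnerLE (X Y : Matrix (Fin n) (Fin n) ℂ) : Prop := (Y - X).PosSemidef

lemma re_isHermitian (A : Matrix (Fin n) (Fin n) ℂ) : (re A).IsHermitian := by
  show ((2⁻¹ : ℂ) • (A + Aᴴ))ᴴ = (2⁻¹ : ℂ) • (A + Aᴴ)
  rw [Matrix.conjTranspose_smul, Matrix.conjTranspose_add,
    Matrix.conjTranspose_conjTranspose, add_comm Aᴴ A]
  simp

/-- The `j`-th largest element of `v` (descending sort). -/
def nthLargest (v : Fin n → ℝ) (j : Fin n) : ℝ :=
  ((List.ofFn v).mergeSort (fun a b => decide (b ≤ a))).get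
    (Fin.cast (by simp) j)

/-- `j`-th largest eigenvalue of a Hermitian matrix. -/
def eigDesc {A : Matrix (Fin n) (Fin n) ℂ} (hA : A.IsHermitian) (j : Fin n) : ℝ :=
  nthLargest hA.eigenvalues j

/-- `j`-th largest singular value. -/
def singular (A : Matrix (Fin n) (Fin n) ℂ) (j : Fin n) : ℝ :=
  nthLargest (fun i => Real.sqrt ((Matrix.isHermitian_conjTranspose_mul_self A).eigenvalues i)) j

/-- The square root of a positive semidefinite matrix, as `Matrix.PosSemidef.sqrt` was defined
in the older Mathlib. -/
def psdSqrt {A : Matrix (Fin n) (Fin n) ℂ} (hA : A.PosSemidef) : Matrix (Fin n) (Fin n) ℂ :=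
  hA.1.eigenvectorUnitary.1 * diagonal ((↑) ∘ (√·) ∘ hA.1.eigenvalues) *
    (star hA.1.eigenvectorUnitary : Matrix (Fin n) (Fin n) ℂ)

/-- Weighted geometric mean of positive definite matrices. -/
def sharp (v : ℝ) {A B : Matrix (Fin n) (Fin n) ℂ} (hA : A.PosDef) (hB : B.PosDef) :
    Matrix (Fin n) (Fin n) ℂ :=
  psdSqrt hA.posSemidef *
    (Matrix.isHermitian_mul_mul_conjTranspose (psdSqrt hA.posSemidef)⁻¹ hB.1).cfc
      (fun x => Real.rpow x v) * psdSqrt hA.posSemidef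

/-- Weighted arithmetic mean. -/
def arith (v : ℝ) (A B : Matrix (Fin n) (Fin n) ℂ) : Matrix (Fin n) (Fin n) ℂ :=
  (1 - v) • A + v • B

/-- Weighted harmonic mean. -/
def harm (v : ℝ) (A B : Matrix (Fin n) (Fin n) ℂ) : Matrix (Fin n) (Fin n) ℂ :=
  ((1 - v) • A⁻¹ + v • B⁻¹)⁻¹

/-- Kantorovich constant. -/
def K (h : ℝ) : ℝ := (h + 1) ^ 2 / (4 * h)

lemma psdSqrt_posSemidef {A : Matrix (Fin n) (Fin n) ℂ} (hA : A.PosSemidef) :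
    (psdSqrt hA).PosSemidef := by
  have hd : (diagonal ((↑) ∘ (√·) ∘ hA.1.eigenvalues : Fin n → ℂ)).PosSemidef :=
    posSemidef_diagonal_iff.mpr fun i => by
      simp only [Function.comp_apply]
      exact Complex.zero_le_real.mpr (Real.sqrt_nonneg _)
  have := hd.mul_mul_conjTranspose_same (hA.1.eigenvectorUnitary : Matrix (Fin n) (Fin n) ℂ)
  unfold psdSqrt
  rw [Matrix.star_eq_conjTranspose]
  exact this

lemma psdSqrt_mul_self {A : Matrix (Fin n) (Fin n) ℂ} (hA : A.PosSemidef) :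
    psdSqrt hA * psdSqrt hA = A := by
  have hU : star (hA.1.eigenvectorUnitary : Matrix (Fin n) (Fin n) ℂ) *
      (hA.1.eigenvectorUnitary : Matrix (Fin n) (Fin n) ℂ) = 1 :=
    Unitary.star_mul_self_of_mem hA.1.eigenvectorUnitary.2
  unfold psdSqrt
  have e : ∀ (U D V : Matrix (Fin n) (Fin n) ℂ), U * D * V * (U * D * V) = U * D * (V * U) * D * V :=
    fun U D V => by simp only [Matrix.mul_assoc]
  rw [e, hU, Matrix.mul_one, Matrix.mul_assoc (hA.1.eigenvectorUnitary : Matrix (Fin n) (Fin n) ℂ),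
    diagonal_mul_diagonal]
  conv_rhs => rw [hA.1.spectral_theorem, Unitary.conjStarAlgAut_apply]
  congr 2
  congr 1
  funext i
  simp only [Function.comp_apply]
  rw [← Complex.ofReal_mul, Real.mul_self_sqrt (hA.eigenvalues_nonneg i)]
  rfl



lemma scalar_key {h t v : ℝ} (hh : 1 ≤ h) (hv0 : 0 ≤ v) (hv1 : v ≤ 1)
    (ht1 : h⁻¹ ≤ t) (ht2 : t ≤ h) : (1 - v) + v * t ≤ K h * t ^ v := by
  have hh0 : 0 < h := lt_of_lt_of_le one_pos hh
  have ht0 : 0 < t := lt_of_lt_of_le (inv_pos.mpr hh0) ht1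
  have hge : t ^ (1 - v) ≤ (1 - v) * t + v := by
    have := Real.geom_mean_le_arith_mean2_weighted (by linarith : (0:ℝ) ≤ 1 - v) hv0 ht0.le
      zero_le_one (by ring)
    simpa using this
  have hd : 0 < (1 - v) * t + v := by
    rcases le_or_gt t 1 with h' | h'
    · nlinarith [mul_nonneg hv0 (by linarith : (0:ℝ) ≤ 1 - t)]
    · nlinarith [mul_nonneg (by linarith : (0:ℝ) ≤ 1 - v) (by linarith : (0:ℝ) ≤ t - 1)]
  have htv : 0 < t ^ v := Real.rpow_pos_of_pos ht0 v
  have hB : t ≤ t ^ v * ((1 - v) * t + v) := by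
    calc t = t ^ v * t ^ (1 - v) := by
          rw [← Real.rpow_add ht0]; norm_num
      _ ≤ t ^ v * ((1 - v) * t + v) := mul_le_mul_of_nonneg_left hge htv.le
  have hKpos : 0 < K h := by unfold K; positivity
  have hq1 : (0:ℝ) ≤ (h - t) * (h * t - 1) := by
    have : (1:ℝ) ≤ h * t := by
      calc (1:ℝ) = h * h⁻¹ := (mul_inv_cancel₀ hh0.ne').symm
        _ ≤ h * t := mul_le_mul_of_nonneg_left ht1 hh0.le
    exact mul_nonneg (by linarith) (by linarith)
  have hq2 : (0:ℝ) ≤ h * ((1 - 2*v)^2 * (t - 1)^2) := by positivity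
  have key4 : 4 * h * (((1 - v) + v * t) * ((1 - v) * t + v)) ≤ (h + 1)^2 * t := by
    nlinarith [hq1, hq2]
  have hC : ((1 - v) + v * t) * ((1 - v) * t + v) ≤ K h * t := by
    rw [K, div_mul_eq_mul_div, le_div_iff₀ (by positivity : (0:ℝ) < 4 * h)]
    nlinarith [key4]
  have chain : ((1 - v) + v * t) * ((1 - v) * t + v) ≤ (K h * t ^ v) * ((1 - v) * t + v) := by
    calc ((1 - v) + v * t) * ((1 - v) * t + v) ≤ K h * t := hC
      _ ≤ K h * (t ^ v * ((1 - v) * t + v)) := mul_le_mul_of_nonneg_left hB hKpos.le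
      _ = (K h * t ^ v) * ((1 - v) * t + v) := by ring
  exact le_of_mul_le_mul_right chain hd

lemma loewnerLE_conj {X Y : Matrix (Fin n) (Fin n) ℂ} (S : Matrix (Fin n) (Fin n) ℂ)
    (hXY : loewnerLE X Y) : loewnerLE (S * X * Sᴴ) (S * Y * Sᴴ) := by
  have h : S * Y * Sᴴ - S * X * Sᴴ = S * (Y - X) * Sᴴ := by
    rw [Matrix.mul_sub, Matrix.sub_mul]
  unfold loewnerLE at *
  rw [h]
  exact hXY.mul_mul_conjTranspose_same S

lemma posSemidef_real_smul {X : Matrix (Fin n) (Fin n) ℂ} (hX : X.PosSemidef) {c : ℝ}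
    (hc : 0 ≤ c) : (c • X).PosSemidef := by
  have h : (c • X) = (c : ℂ) • X := by
    ext i j; simp [Complex.real_smul]
  rw [h]
  refine ⟨?_, fun x => ?_⟩
  · unfold Matrix.IsHermitian
    rw [Matrix.conjTranspose_smul, hX.1.eq]
    congr 1
    simp
  · exact (hX.smul (Complex.zero_le_real.mpr hc)).2 x

lemma le_eig {C : Matrix (Fin n) (Fin n) ℂ} (hC : C.IsHermitian) {a : ℝ}
    (h1 : loewnerLE (a • (1 : Matrix (Fin n) (Fin n) ℂ)) C) (i : Fin n) :
    a ≤ hC.eigenvalues i := by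
  set x : Fin n → ℂ := ⇑(hC.eigenvectorBasis i) with hx
  have hxx : RCLike.re (star x ⬝ᵥ x) = 1 := by
    rw [hx, dotProduct_comm, ← EuclideanSpace.inner_eq_star_dotProduct, inner_self_eq_norm_sq_to_K,
      hC.eigenvectorBasis.orthonormal.1 i]
    norm_num
  have h0 := h1.re_dotProduct_nonneg x
  rw [Matrix.sub_mulVec, dotProduct_sub, map_sub, Matrix.smul_mulVec,
    Matrix.one_mulVec, dotProduct_smul, RCLike.smul_re, hxx] at h0
  have := hC.eigenvalues_eq i
  rw [← hx] at this
  linarith [h0, this.ge]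

lemma eig_le {C : Matrix (Fin n) (Fin n) ℂ} (hC : C.IsHermitian) {b : ℝ}
    (h2 : loewnerLE C (b • (1 : Matrix (Fin n) (Fin n) ℂ))) (i : Fin n) :
    hC.eigenvalues i ≤ b := by
  set x : Fin n → ℂ := ⇑(hC.eigenvectorBasis i) with hx
  have hxx : RCLike.re (star x ⬝ᵥ x) = 1 := by
    rw [hx, dotProduct_comm, ← EuclideanSpace.inner_eq_star_dotProduct, inner_self_eq_norm_sq_to_K,
      hC.eigenvectorBasis.orthonormal.1 i]
    norm_num
  have h0 := h2.re_dotProduct_nonneg x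
  rw [Matrix.sub_mulVec, dotProduct_sub, map_sub, Matrix.smul_mulVec,
    Matrix.one_mulVec, dotProduct_smul, RCLike.smul_re, hxx] at h0
  have := hC.eigenvalues_eq i
  rw [← hx] at this
  linarith [h0, this.ge]

lemma loewnerLE_cfc {C : Matrix (Fin n) (Fin n) ℂ} (hC : C.IsHermitian) (k v : ℝ) (f : ℝ → ℝ)
    (hfg : ∀ i, (1 - v) + v * hC.eigenvalues i ≤ k * f (hC.eigenvalues i)) :
    loewnerLE ((1 - v) • (1 : Matrix (Fin n) (Fin n) ℂ) + v • C) (k • hC.cfc f) := by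
  unfold loewnerLE
  have hU : (hC.eigenvectorUnitary : Matrix (Fin n) (Fin n) ℂ) *
      star (hC.eigenvectorUnitary : Matrix (Fin n) (Fin n) ℂ) = 1 :=
    (Matrix.mem_unitaryGroup_iff).mp hC.eigenvectorUnitary.2
  have hdiag : k • Matrix.diagonal (RCLike.ofReal ∘ f ∘ hC.eigenvalues)
      - ((1 - v) • (1 : Matrix (Fin n) (Fin n) ℂ)
        + v • Matrix.diagonal (RCLike.ofReal ∘ hC.eigenvalues))
      = Matrix.diagonal (fun i =>
          ((k * f (hC.eigenvalues i) - ((1 - v) + v * hC.eigenvalues i) : ℝ) : ℂ)) := by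
    ext i j
    by_cases hij : i = j
    · subst hij
      simp [Matrix.diagonal_apply_eq, Matrix.one_apply_eq, Complex.real_smul]
    · simp [Matrix.diagonal_apply_ne _ hij, Matrix.one_apply_ne hij]
  have h1 : (hC.eigenvectorUnitary : Matrix (Fin n) (Fin n) ℂ) *
      ((1 - v) • (1 : Matrix (Fin n) (Fin n) ℂ)
        + v • Matrix.diagonal (RCLike.ofReal ∘ hC.eigenvalues)) *
      star (hC.eigenvectorUnitary : Matrix (Fin n) (Fin n) ℂ)
      = (1 - v) • (1 : Matrix (Fin n) (Fin n) ℂ) + v • C := by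
    rw [Matrix.mul_add, Matrix.add_mul, Matrix.mul_smul, Matrix.smul_mul, mul_one, hU,
      Matrix.mul_smul, Matrix.smul_mul]
    conv_rhs => rw [hC.spectral_theorem, Unitary.conjStarAlgAut_apply]
  have h2 : (hC.eigenvectorUnitary : Matrix (Fin n) (Fin n) ℂ) *
      (k • Matrix.diagonal (RCLike.ofReal ∘ f ∘ hC.eigenvalues)) *
      star (hC.eigenvectorUnitary : Matrix (Fin n) (Fin n) ℂ) = k • hC.cfc f := by
    rw [Matrix.mul_smul, Matrix.smul_mul, Matrix.IsHermitian.cfc, Unitary.conjStarAlgAut_apply]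
  have key : k • hC.cfc f - ((1 - v) • (1 : Matrix (Fin n) (Fin n) ℂ) + v • C)
      = (hC.eigenvectorUnitary : Matrix (Fin n) (Fin n) ℂ) * Matrix.diagonal (fun i =>
          ((k * f (hC.eigenvalues i) - ((1 - v) + v * hC.eigenvalues i) : ℝ) : ℂ)) *
        star (hC.eigenvectorUnitary : Matrix (Fin n) (Fin n) ℂ) := by
    rw [← h1, ← h2, ← Matrix.sub_mul, ← Matrix.mul_sub, hdiag]
  rw [key, Matrix.star_eq_conjTranspose]
  refine Matrix.PosSemidef.mul_mul_conjTranspose_same ?_ _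
  refine Matrix.posSemidef_diagonal_iff.mpr fun i => ?_
  exact Complex.zero_le_real.mpr (by linarith [hfg i])


/-- `A ∇ᵥ B ≤ K(h) (A ♯ᵥ B)`. -/
theorem arith_le_kantorovich_smul_sharp (A B : Matrix (Fin n) (Fin n) ℂ) (hA : A.PosDef) (hB : B.PosDef)
    (v : ℝ) (hv : v ∈ Set.Icc 0 1) (m M : ℝ) (hm : 0 < m) (hmM : m ≤ M)
    (hA1 : loewnerLE (m • (1 : Matrix (Fin n) (Fin n) ℂ)) A) (hA2 : loewnerLE A (M • 1))
    (hB1 : loewnerLE (m • (1 : Matrix (Fin n) (Fin n) ℂ)) B) (hB2 : loewnerLE B (M • 1)) :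
    loewnerLE (arith v A B) (K (M / m) • sharp v hA hB) := by
  obtain ⟨hv0, hv1⟩ := hv
  have hM : 0 < M := lt_of_lt_of_le hm hmM
  set S : Matrix (Fin n) (Fin n) ℂ := psdSqrt hA.posSemidef with hSdef
  have hSpsd : S.PosSemidef := psdSqrt_posSemidef hA.posSemidef
  have hSH : Sᴴ = S := hSpsd.1
  have hSS : S * S = A := psdSqrt_mul_self hA.posSemidef
  have hdetS : IsUnit S.det := by
    have h1 : S.det * S.det = A.det := by rw [← Matrix.det_mul, hSS]
    have h2 : A.det ≠ 0 := hA.det_pos.ne'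
    refine isUnit_iff_ne_zero.mpr fun h => ?_
    rw [h, zero_mul] at h1; exact h2 h1.symm
  have hS1 : S * S⁻¹ = 1 := Matrix.mul_nonsing_inv S hdetS
  have hS2 : S⁻¹ * S = 1 := Matrix.nonsing_inv_mul S hdetS
  have hSinvH : (S⁻¹)ᴴ = S⁻¹ := by rw [Matrix.conjTranspose_nonsing_inv, hSH]
  have hC : (S⁻¹ * B * (S⁻¹)ᴴ).IsHermitian := Matrix.isHermitian_mul_mul_conjTranspose _ hB.1
  set C : Matrix (Fin n) (Fin n) ℂ := S⁻¹ * B * (S⁻¹)ᴴ with hCdef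
  have hconjA : S⁻¹ * A * (S⁻¹)ᴴ = 1 := by
    rw [hSinvH, ← hSS, ← Matrix.mul_assoc, hS2, Matrix.one_mul, hS1]
  have hBA1 : (B - (m/M) • A).PosSemidef := by
    have e : B - (m/M) • A = (B - m • (1 : Matrix (Fin n) (Fin n) ℂ))
        + (m/M) • (M • (1 : Matrix (Fin n) (Fin n) ℂ) - A) := by
      rw [smul_sub, smul_smul, div_mul_cancel₀ _ hM.ne']
      abel
    rw [e]
    exact Matrix.PosSemidef.add hB1 (posSemidef_real_smul hA2 (div_nonneg hm.le hM.le))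
  have hBA2 : ((M/m) • A - B).PosSemidef := by
    have e : (M/m) • A - B = (M/m) • (A - m • (1 : Matrix (Fin n) (Fin n) ℂ))
        + (M • (1 : Matrix (Fin n) (Fin n) ℂ) - B) := by
      rw [smul_sub, smul_smul, div_mul_cancel₀ _ hm.ne']
      abel
    rw [e]
    exact Matrix.PosSemidef.add (posSemidef_real_smul hA1 (div_nonneg hM.le hm.le)) hB2
  have hCb1 : loewnerLE ((m/M) • (1 : Matrix (Fin n) (Fin n) ℂ)) C := by
    show (C - (m/M) • (1 : Matrix (Fin n) (Fin n) ℂ)).PosSemidef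
    have e : C - (m/M) • (1 : Matrix (Fin n) (Fin n) ℂ) = S⁻¹ * (B - (m/M) • A) * (S⁻¹)ᴴ := by
      rw [Matrix.mul_sub, Matrix.sub_mul, hCdef]
      congr 1
      rw [Matrix.mul_smul, Matrix.smul_mul, hconjA]
    rw [e]
    exact hBA1.mul_mul_conjTranspose_same _
  have hCb2 : loewnerLE C ((M/m) • (1 : Matrix (Fin n) (Fin n) ℂ)) := by
    show ((M/m) • (1 : Matrix (Fin n) (Fin n) ℂ) - C).PosSemidef
    have e : (M/m) • (1 : Matrix (Fin n) (Fin n) ℂ) - C = S⁻¹ * ((M/m) • A - B) * (S⁻¹)ᴴ := by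
      rw [Matrix.mul_sub, Matrix.sub_mul, hCdef]
      congr 1
      rw [Matrix.mul_smul, Matrix.smul_mul, hconjA]
    rw [e]
    exact hBA2.mul_mul_conjTranspose_same _
  have h1le : (1:ℝ) ≤ M/m := (one_le_div hm).mpr hmM
  have hCb1' : loewnerLE ((M/m)⁻¹ • (1 : Matrix (Fin n) (Fin n) ℂ)) C := by
    rw [inv_div]; exact hCb1
  have hcfc := loewnerLE_cfc hC (K (M/m)) v (fun x => Real.rpow x v)
    (fun i => scalar_key h1le hv0 hv1 (le_eig hC hCb1' i) (eig_le hC hCb2 i))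
  have hconj := loewnerLE_conj S hcfc
  have hSCS : S * C * S = B := by
    rw [hCdef, hSinvH]
    simp only [← Matrix.mul_assoc]
    rw [hS1, Matrix.one_mul, Matrix.mul_assoc, hS2, Matrix.mul_one]
  have hfinal1 : S * ((1 - v) • (1 : Matrix (Fin n) (Fin n) ℂ) + v • C) * Sᴴ = arith v A B := by
    rw [hSH]
    simp only [Matrix.mul_add, Matrix.add_mul, Matrix.mul_smul, Matrix.smul_mul, Matrix.mul_one,
      hSS, hSCS]
    rfl
  have hfinal2 : S * (K (M/m) • hC.cfc (fun x => Real.rpow x v)) * Sᴴ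
      = K (M/m) • sharp v hA hB := by
    rw [hSH, Matrix.mul_smul, Matrix.smul_mul]
    rfl
  rw [← hfinal1, ← hfinal2]
  exact hconj


end Paper
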